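/- Let n ≥ 2 be an integer, G_n the (n × n)-grid, and C_n the cycle bounding the outer face of its natural plane drawing (the cycle on the vertices (i,j) with i ∈ {1,n} or j ∈ {1,n}). Then for any two vertices u, v of C_n, the distance between u and v within G_n is at least half of their distance within C_n, i.e., d_{G_n}(u,v) ≥ d_{C_n}(u,v)/2. -/

import Mathlib

open SimpleGraph

/-- Adjacency of points of `ℕ × ℕ` at Euclidean distance 1. -/
def gridAdj (a b : ℕ × ℕ) : Prop :=
  (a.1 = b.1 ∧ (a.2 + 1 = b.2 ∨ b.2 + 1 = a.2)) ∨
  (a.2 = b.2 ∧ (a.1 + 1 = b.1 ∨ b.1 + 1 = a.1))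

/-- The vertex set of the `n × n` grid: pairs `(i, j)` with `1 ≤ i, j ≤ n`. -/
def GridV (n : ℕ) : Type := {p : ℕ × ℕ // 1 ≤ p.1 ∧ p.1 ≤ n ∧ 1 ≤ p.2 ∧ p.2 ≤ n}

/-- The `n × n` grid graph. -/
def gridGraph (n : ℕ) : SimpleGraph (GridV n) where
  Adj a b := gridAdj a.1 b.1
  symm := by constructor; intro a b h; unfold gridAdj at *; tauto
  loopless := by constructor; intro a h; unfold gridAdj at h; omega

/-- The boundary vertices of the `n × n` grid. -/
def gridBoundary (n : ℕ) : Set (GridV n) :=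
  {v | v.1.1 = 1 ∨ v.1.1 = n ∨ v.1.2 = 1 ∨ v.1.2 = n}

/-- The outer cycle `C_n` of the `n × n` grid, as a graph on the grid's vertices:
the edges of the grid joining two boundary vertices. -/
def gridOuterCycle (n : ℕ) : SimpleGraph (GridV n) where
  Adj a b := gridAdj a.1 b.1 ∧ a ∈ gridBoundary n ∧ b ∈ gridBoundary n
  symm := by
    constructor
    intro a b h
    refine ⟨?_, h.2.2, h.2.1⟩
    have := h.1; unfold gridAdj at *; tauto
  loopless := by constructor; intro a h; have := h.1; unfold gridAdj at this; omega

/-- Parametrization (by position) of the boundary cycle, on positions `m < 4*(n-1)`. -/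
def tcb (n m : ℕ) : ℕ × ℕ :=
  if m < n - 1 then (1, m + 1)
  else if m < 2 * (n - 1) then (m + 2 - n, n)
  else if m < 3 * (n - 1) then (n, 3 * n - 2 - m)
  else (4 * n - 3 - m, 1)

/-- Periodic parametrization of the boundary cycle. -/
def tc (n k : ℕ) : ℕ × ℕ := tcb n (k % (4 * (n - 1)))

lemma tcb_mem (n : ℕ) (hn : 2 ≤ n) (m : ℕ) (hm : m < 4 * (n - 1)) :
    1 ≤ (tcb n m).1 ∧ (tcb n m).1 ≤ n ∧ 1 ≤ (tcb n m).2 ∧ (tcb n m).2 ≤ n := by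
  unfold tcb; split_ifs <;> simp <;> omega

lemma tc_mem (n : ℕ) (hn : 2 ≤ n) (k : ℕ) :
    1 ≤ (tc n k).1 ∧ (tc n k).1 ≤ n ∧ 1 ≤ (tc n k).2 ∧ (tc n k).2 ≤ n :=
  tcb_mem n hn _ (Nat.mod_lt _ (by omega))

/-- Boundary-cycle parametrization landing in `GridV n`. -/
def tv (n : ℕ) (hn : 2 ≤ n) (k : ℕ) : GridV n := ⟨tc n k, tc_mem n hn k⟩

lemma tc_eq_tcb (n k : ℕ) (hk : k < 4 * (n - 1)) : tc n k = tcb n k := by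
  unfold tc; rw [Nat.mod_eq_of_lt hk]

lemma tv_periodic (n : ℕ) (hn : 2 ≤ n) (k : ℕ) :
    tv n hn (k + 4 * (n - 1)) = tv n hn k := by
  apply Subtype.ext
  show tc n (k + 4 * (n - 1)) = tc n k
  unfold tc
  rw [Nat.add_mod_right]

lemma tv_boundary (n : ℕ) (hn : 2 ≤ n) (k : ℕ) : tv n hn k ∈ gridBoundary n := by
  show (tc n k).1 = 1 ∨ (tc n k).1 = n ∨ (tc n k).2 = 1 ∨ (tc n k).2 = n
  unfold tc tcb
  split_ifs <;> simp

lemma tcb_adj (n : ℕ) (hn : 2 ≤ n) (m m' : ℕ) (hm : m < 4 * (n - 1))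
    (h : m' = m + 1 ∨ (m + 1 = 4 * (n - 1) ∧ m' = 0)) :
    gridAdj (tcb n m) (tcb n m') := by
  unfold tcb gridAdj
  rcases h with rfl | ⟨h1, rfl⟩ <;> split_ifs <;> dsimp only <;> omega

lemma tv_adj (n : ℕ) (hn : 2 ≤ n) (k : ℕ) :
    (gridOuterCycle n).Adj (tv n hn k) (tv n hn (k + 1)) := by
  refine ⟨?_, tv_boundary n hn k, tv_boundary n hn (k + 1)⟩
  show gridAdj (tc n k) (tc n (k + 1))
  have hL : 0 < 4 * (n - 1) := by omega
  have hm : k % (4 * (n - 1)) < 4 * (n - 1) := Nat.mod_lt _ hL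
  have h1 : (k + 1) % (4 * (n - 1)) = (k % (4 * (n - 1)) + 1) % (4 * (n - 1)) := by
    conv_lhs => rw [Nat.add_mod]
    rw [Nat.mod_eq_of_lt (show 1 < 4 * (n - 1) by omega)]
  unfold tc
  rw [h1]
  rcases Nat.lt_or_ge (k % (4 * (n - 1)) + 1) (4 * (n - 1)) with h2 | h2
  · rw [Nat.mod_eq_of_lt h2]
    exact tcb_adj n hn _ _ hm (Or.inl rfl)
  · have h3 : k % (4 * (n - 1)) + 1 = 4 * (n - 1) := by omega
    rw [h3, Nat.mod_self]
    exact tcb_adj n hn _ _ hm (Or.inr ⟨h3, rfl⟩)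

lemma exists_tv_walk (n : ℕ) (hn : 2 ≤ n) (m : ℕ) : ∀ a : ℕ,
    ∃ p : (gridOuterCycle n).Walk (tv n hn a) (tv n hn (a + m)), p.length = m := by
  induction m with
  | zero => intro a; exact ⟨SimpleGraph.Walk.nil, rfl⟩
  | succ m ih =>
      intro a
      obtain ⟨p, hp⟩ := ih (a + 1)
      have e : tv n hn (a + 1 + m) = tv n hn (a + (m + 1)) := by
        congr 1; omega
      exact ⟨SimpleGraph.Walk.cons (tv_adj n hn a) (p.copy rfl e), by simp [hp]⟩

/-- Manhattan distance on `ℕ × ℕ`. -/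
def man (p q : ℕ × ℕ) : ℕ := (p.1 - q.1) + (q.1 - p.1) + (p.2 - q.2) + (q.2 - p.2)

lemma man_le_walk {n : ℕ} {u v : GridV n} (p : (gridGraph n).Walk u v) :
    man u.1 v.1 ≤ p.length := by
  induction p with
  | nil => simp [man]
  | @cons a b c h p ih =>
      have hab : gridAdj a.1 b.1 := h
      rw [SimpleGraph.Walk.length_cons]
      unfold man gridAdj at *
      omega

lemma boundary_eq_tv (n : ℕ) (hn : 2 ≤ n) (v : GridV n) (hv : v ∈ gridBoundary n) :
    ∃ k, k < 4 * (n - 1) ∧ tv n hn k = v := by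
  obtain ⟨⟨i, j⟩, hij⟩ := v
  simp only [gridBoundary, Set.mem_setOf_eq] at hv
  simp only at hv hij
  change i = 1 ∨ i = n ∨ j = 1 ∨ j = n at hv
  by_cases h1 : i = 1
  · refine ⟨j - 1, by omega, ?_⟩
    apply Subtype.ext
    show tc n (j - 1) = (i, j)
    rw [tc_eq_tcb n _ (by omega)]
    unfold tcb; split_ifs <;> simp only [Prod.mk.injEq] <;> omega
  · by_cases h2 : j = n
    · refine ⟨n + i - 2, by omega, ?_⟩
      apply Subtype.ext
      show tc n (n + i - 2) = (i, j)
      rw [tc_eq_tcb n _ (by omega)]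
      unfold tcb; split_ifs <;> simp only [Prod.mk.injEq] <;> omega
    · by_cases h3 : i = n
      · refine ⟨3 * n - 2 - j, by omega, ?_⟩
        apply Subtype.ext
        show tc n (3 * n - 2 - j) = (i, j)
        rw [tc_eq_tcb n _ (by omega)]
        unfold tcb; split_ifs <;> simp only [Prod.mk.injEq] <;> omega
      · refine ⟨4 * n - 3 - i, by omega, ?_⟩
        apply Subtype.ext
        show tc n (4 * n - 3 - i) = (i, j)
        rw [tc_eq_tcb n _ (by omega)]
        unfold tcb; split_ifs <;> simp only [Prod.mk.injEq] <;> omega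

lemma arith (n : ℕ) (hn : 2 ≤ n) (a b : ℕ) (hab : a ≤ b) (hb : b < 4 * (n - 1)) :
    b - a ≤ 2 * man (tcb n a) (tcb n b) ∨
      4 * (n - 1) - (b - a) ≤ 2 * man (tcb n a) (tcb n b) := by
  unfold tcb man
  split_ifs <;> dsimp only <;> omega

lemma key (n : ℕ) (hn : 2 ≤ n) (a b : ℕ) (hab : a ≤ b) (hb : b < 4 * (n - 1)) :
    (gridOuterCycle n).dist (tv n hn a) (tv n hn b) ≤
      2 * (gridGraph n).dist (tv n hn a) (tv n hn b) := by
  -- walk of length b - a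
  obtain ⟨p1', hp1⟩ := exists_tv_walk n hn (b - a) a
  have e1 : tv n hn (a + (b - a)) = tv n hn b := by congr 1; omega
  have p1 := p1'.copy rfl e1
  have h1 : (gridOuterCycle n).dist (tv n hn a) (tv n hn b) ≤ b - a := by
    have := SimpleGraph.dist_le (p1'.copy rfl e1)
    rwa [SimpleGraph.Walk.length_copy, hp1] at this
  -- walk the other way, length L - (b - a)
  obtain ⟨p2', hp2⟩ := exists_tv_walk n hn (4 * (n - 1) - (b - a)) b
  have e2 : tv n hn (b + (4 * (n - 1) - (b - a))) = tv n hn a := by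
    rw [show b + (4 * (n - 1) - (b - a)) = a + 4 * (n - 1) from by omega,
      tv_periodic n hn a]
  have p2 := p2'.copy rfl e2
  have h2 : (gridOuterCycle n).dist (tv n hn a) (tv n hn b) ≤ 4 * (n - 1) - (b - a) := by
    rw [SimpleGraph.dist_comm]
    have := SimpleGraph.dist_le (p2'.copy rfl e2)
    rwa [SimpleGraph.Walk.length_copy, hp2] at this
  -- grid distance lower bound
  have hle : gridOuterCycle n ≤ gridGraph n := fun _ _ h => h.1
  have hr : (gridGraph n).Reachable (tv n hn a) (tv n hn b) :=
    SimpleGraph.Reachable.mono hle ⟨p1⟩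
  obtain ⟨q, hq⟩ := hr.exists_walk_length_eq_dist
  have hman : man (tv n hn a).1 (tv n hn b).1 ≤ (gridGraph n).dist (tv n hn a) (tv n hn b) :=
    hq ▸ man_le_walk q
  have htc : (tv n hn a).1 = tcb n a ∧ (tv n hn b).1 = tcb n b :=
    ⟨tc_eq_tcb n a (by omega), tc_eq_tcb n b hb⟩
  rcases arith n hn a b hab hb with h | h
  · calc (gridOuterCycle n).dist (tv n hn a) (tv n hn b) ≤ b - a := h1
      _ ≤ 2 * man (tcb n a) (tcb n b) := h
      _ = 2 * man (tv n hn a).1 (tv n hn b).1 := by rw [htc.1, htc.2]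
      _ ≤ 2 * (gridGraph n).dist (tv n hn a) (tv n hn b) := by omega
  · calc (gridOuterCycle n).dist (tv n hn a) (tv n hn b) ≤ 4 * (n - 1) - (b - a) := h2
      _ ≤ 2 * man (tcb n a) (tcb n b) := h
      _ = 2 * man (tv n hn a).1 (tv n hn b).1 := by rw [htc.1, htc.2]
      _ ≤ 2 * (gridGraph n).dist (tv n hn a) (tv n hn b) := by omega

theorem grid_distance_distortion (n : ℕ) (hn : 2 ≤ n) :
    ∀ u v : GridV n, u ∈ gridBoundary n → v ∈ gridBoundary n →
      (gridOuterCycle n).dist u v ≤ 2 * (gridGraph n).dist u v := by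
  intro u v hu hv
  obtain ⟨a, ha, rfl⟩ := boundary_eq_tv n hn u hu
  obtain ⟨b, hb, rfl⟩ := boundary_eq_tv n hn v hv
  rcases Nat.le_total a b with hab | hab
  · exact key n hn a b hab hb
  · rw [SimpleGraph.dist_comm, SimpleGraph.dist_comm (G := gridGraph n)]
    exact key n hn b a hab ha
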